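/- Let K be a Markov kernel on a Polish space (Ω,d) with granularity σ_∞ = (1/2) sup_x diam(Supp K(x,·)). Fix constants 0 ≤ A, B ≤ 1 and a function φ satisfying |φ(x) − φ(y)| ≤ max(A·d(x,y), B) for all x,y. Then for any λ ≤ min(1/(3Aσ_∞), 2/(3B)), (K e^{λφ})(x) ≤ e^{λ(Kφ)(x)} (1 + λ² Var_{K(x,·)}(φ)) ≤ exp(λ(Kφ)(x) + λ² Var_{K(x,·)}(φ)) for all x. -/

import Mathlib

open MeasureTheory ProbabilityTheory

noncomputable section

variable {Ω : Type*} [MeasurableSpace Ω] [MetricSpace Ω]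

/-- Exponential moment bound (extension of Ollivier's Lemma 38): for a kernel with
granularity `σinf` and a function `φ` with `|φ(x)-φ(y)| ≤ max(A d(x,y), B)`, for
`λ ≤ min(1/(3Aσinf), 2/(3B))` (stated multiplicatively),
`(K e^{λφ})(x) ≤ e^{λ(Kφ)(x)}(1 + λ² Var_{K(x,·)}(φ)) ≤ exp(λ(Kφ)(x) + λ² Var_{K(x,·)}(φ))`. -/
theorem exp_moment_bound
    (K : Kernel Ω Ω) [IsMarkovKernel K]
    (σinf : ℝ) (hσinf : 0 ≤ σinf)
    (hgran : ∀ x : Ω, ∀ᵐ y ∂(K x), ∀ᵐ z ∂(K x), dist y z ≤ 2 * σinf)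
    (A B : ℝ) (hA0 : 0 ≤ A) (hA1 : A ≤ 1) (hB0 : 0 ≤ B) (hB1 : B ≤ 1)
    (φ : Ω → ℝ) (hφmeas : Measurable φ)
    (hφ : ∀ x y : Ω, |φ x - φ y| ≤ max (A * dist x y) B)
    (lam : ℝ) (hlam0 : 0 ≤ lam)
    (hlamA : lam * (3 * A * σinf) ≤ 1) (hlamB : lam * (3 * B) ≤ 2)
    (x : Ω)
    (hint : Integrable φ (K x))
    (hexpint : Integrable (fun y => Real.exp (lam * φ y)) (K x)) :
    (∫ y, Real.exp (lam * φ y) ∂(K x)) ≤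
        Real.exp (lam * ∫ y, φ y ∂(K x)) * (1 + lam ^ 2 * variance φ (K x))
    ∧ Real.exp (lam * ∫ y, φ y ∂(K x)) * (1 + lam ^ 2 * variance φ (K x)) ≤
        Real.exp (lam * ∫ y, φ y ∂(K x) + lam ^ 2 * variance φ (K x)) := by
  set m : ℝ := ∫ y, φ y ∂(K x) with hm
  set C : ℝ := max (2 * A * σinf) B with hC
  have hC0 : 0 ≤ C := le_max_of_le_right hB0
  -- a.e. bound on |φ y - m|
  have hae : ∀ᵐ y ∂(K x), |φ y - m| ≤ C := by
    filter_upwards [hgran x] with y hy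
    have hz : ∀ᵐ z ∂(K x), |φ y - φ z| ≤ C := by
      filter_upwards [hy] with z hz
      refine (hφ y z).trans (max_le_max ?_ le_rfl)
      calc A * dist y z ≤ A * (2 * σinf) := by
            exact mul_le_mul_of_nonneg_left hz hA0
        _ = 2 * A * σinf := by ring
    have h1 : φ y - m = ∫ z, (φ y - φ z) ∂(K x) := by
      rw [integral_sub (integrable_const _) hint, integral_const]
      simp [hm]
    rw [h1]
    calc |∫ z, (φ y - φ z) ∂(K x)| ≤ ∫ z, |φ y - φ z| ∂(K x) := by
          simpa [Real.norm_eq_abs] using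
            norm_integral_le_integral_norm (μ := K x) (fun z => φ y - φ z)
      _ ≤ ∫ _z, C ∂(K x) := by
          refine integral_mono_ae (((integrable_const _).sub hint).abs) (integrable_const _) hz
      _ = C := by simp
  -- λ|φ y - m| ≤ 1 a.e.
  have hsmall : ∀ᵐ y ∂(K x), |lam * (φ y - m)| ≤ 1 := by
    filter_upwards [hae] with y hy
    rw [abs_mul, abs_of_nonneg hlam0]
    calc lam * |φ y - m| ≤ lam * C := mul_le_mul_of_nonneg_left hy hlam0
      _ ≤ 1 := by
        rcases max_cases (2 * A * σinf) B with ⟨h, _⟩ | ⟨h, _⟩ <;> rw [hC, h] <;> nlinarith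
  -- Memℒp 2
  have haebd : ∀ᵐ y ∂(K x), |φ y| ≤ |m| + C := by
    filter_upwards [hae] with y hy
    calc |φ y| = |m + (φ y - m)| := by ring_nf
      _ ≤ |m| + |φ y - m| := abs_add_le _ _
      _ ≤ |m| + C := by linarith
  have hmem : MemLp φ 2 (K x) := by
    refine MemLp.of_bound hint.aestronglyMeasurable (|m| + C) ?_
    filter_upwards [haebd] with y hy using by simpa [Real.norm_eq_abs] using hy
  have hvar : variance φ (K x) = ∫ y, (φ y - m) ^ 2 ∂(K x) := by
    rw [variance_eq_integral hmem.aestronglyMeasurable.aemeasurable]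
  have hvar0 : 0 ≤ variance φ (K x) := variance_nonneg _ _
  constructor
  · -- main inequality
    have hsqint : Integrable (fun y => (φ y - m) ^ 2) (K x) := by
      have := (hmem.sub (memLp_const m)).integrable_sq
      simpa using this
    have hptwise : ∀ᵐ y ∂(K x),
        Real.exp (lam * φ y) ≤
          Real.exp (lam * m) * (1 + lam * (φ y - m) + (lam * (φ y - m)) ^ 2) := by
      filter_upwards [hsmall] with y hy
      have h1 : Real.exp (lam * (φ y - m)) ≤ 1 + lam * (φ y - m) + (lam * (φ y - m)) ^ 2 := by
        have := Real.abs_exp_sub_one_sub_id_le hy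
        have := abs_sub_le_iff.1 this |>.1
        linarith [this]
      calc Real.exp (lam * φ y) = Real.exp (lam * m) * Real.exp (lam * (φ y - m)) := by
            rw [← Real.exp_add]; ring_nf
        _ ≤ _ := mul_le_mul_of_nonneg_left h1 (Real.exp_pos _).le
    have hRint : Integrable
        (fun y => Real.exp (lam * m) * (1 + lam * (φ y - m) + (lam * (φ y - m)) ^ 2)) (K x) := by
      apply Integrable.const_mul
      refine Integrable.add (Integrable.add (integrable_const _) ?_) ?_
      · exact (hint.sub (integrable_const m)).const_mul lam
      · have : Integrable (fun y => lam ^ 2 * (φ y - m) ^ 2) (K x) := hsqint.const_mul _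
        refine this.congr ?_
        filter_upwards with y using by ring
    calc (∫ y, Real.exp (lam * φ y) ∂(K x))
        ≤ ∫ y, Real.exp (lam * m) * (1 + lam * (φ y - m) + (lam * (φ y - m)) ^ 2) ∂(K x) :=
          integral_mono_ae hexpint hRint hptwise
      _ = Real.exp (lam * m) * (1 + lam ^ 2 * variance φ (K x)) := by
          rw [integral_const_mul, hvar]
          congr 1
          have i2 : Integrable (fun y => lam * (φ y - m)) (K x) :=
            (hint.sub (integrable_const m)).const_mul lam
          have i3 : Integrable (fun y => (lam * (φ y - m)) ^ 2) (K x) := by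
            simpa [mul_pow] using hsqint.const_mul (lam ^ 2)
          have i12 : Integrable (fun a => 1 + lam * (φ a - m)) (K x) := by
            exact (integrable_const (1:ℝ)).add i2
          rw [integral_add i12 i3, integral_add (integrable_const (1:ℝ)) i2]
          have h0 : ∫ y, lam * (φ y - m) ∂(K x) = 0 := by
            rw [integral_const_mul, integral_sub hint (integrable_const m), integral_const]
            simp [hm]
          have h2 : ∫ y, (lam * (φ y - m)) ^ 2 ∂(K x)
              = lam ^ 2 * ∫ y, (φ y - m) ^ 2 ∂(K x) := by
            simp_rw [mul_pow]; exact integral_const_mul _ _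
          rw [h0, h2]
          simp
  · rw [Real.exp_add]
    exact mul_le_mul_of_nonneg_left
      (by linarith [Real.add_one_le_exp (lam ^ 2 * variance φ (K x)), sq_nonneg lam,
          mul_nonneg (sq_nonneg lam) hvar0]) (Real.exp_pos _).le
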